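/- If c: R^d × R^d → R is continuous and bounded from below, and μ, ν are probability measures on R^d with OT_c(μ,ν) finite, then the infimum in the definition of OT_c(μ,ν) over couplings γ ∈ Π(μ,ν) is attained. -/

import Mathlib

open MeasureTheory ENNReal

/-- `γ` is a coupling of `μ` and `ν`. -/
def IsCoupling {d : ℕ} (γ : Measure (EuclideanSpace ℝ (Fin d) × EuclideanSpace ℝ (Fin d)))
    (μ ν : Measure (EuclideanSpace ℝ (Fin d))) : Prop :=
  γ.map Prod.fst = μ ∧ γ.map Prod.snd = ν


open MeasureTheory Topology Filter Set BoundedContinuousFunction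
open scoped NNReal ENNReal

namespace OTAux

variable {X : Type*} [TopologicalSpace X] [CompactSpace X] [T2Space X]

/-- The assumptions on the functional `L`. -/
structure LGood (L : (X →ᵇ ℝ≥0) → ℝ≥0∞) : Prop where
  add : ∀ f g, L (f + g) = L f + L g
  mono : ∀ f g : X →ᵇ ℝ≥0, (∀ x, f x ≤ g x) → L f ≤ L g
  smul : ∀ (r : ℝ≥0) (f), L (r • f) = (r : ℝ≥0∞) * L f
  fin : ∀ f, L f ≠ ∞

variable {L : (X →ᵇ ℝ≥0) → ℝ≥0∞}

/-- Riesz content-type value on sets. -/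
noncomputable def Jc (L : (X →ᵇ ℝ≥0) → ℝ≥0∞) (K : Set X) : ℝ≥0∞ :=
  ⨅ (f : X →ᵇ ℝ≥0) (_ : ∀ x ∈ K, 1 ≤ f x), L f

lemma Jc_le {K : Set X} {f : X →ᵇ ℝ≥0} (hf : ∀ x ∈ K, 1 ≤ f x) : Jc L K ≤ L f :=
  iInf₂_le f hf

lemma Jc_le_L_one (K : Set X) : Jc L K ≤ L 1 :=
  Jc_le fun x _ => by simp

lemma Jc_ne_top (hL : LGood L) (K : Set X) : Jc L K ≠ ∞ :=
  ((Jc_le_L_one K).trans_lt (hL.fin 1).lt_top).ne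

lemma Jc_mono {K₁ K₂ : Set X} (h : K₁ ⊆ K₂) : Jc L K₁ ≤ Jc L K₂ :=
  le_iInf₂ fun f hf => Jc_le fun x hx => hf x (h hx)

lemma le_Jc (hL : LGood L) {K : Set X} {g : X →ᵇ ℝ≥0} (hg1 : ∀ x, g x ≤ 1)
    (hg0 : ∀ x ∉ K, g x = 0) : L g ≤ Jc L K := by
  refine le_iInf₂ fun f hf => hL.mono _ _ fun x => ?_
  by_cases hx : x ∈ K
  · exact (hg1 x).trans (hf x hx)
  · simp [hg0 x hx]

lemma exists_adm (hL : LGood L) (K : Set X) {a : ℝ≥0∞} (ha : Jc L K < a) :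
    ∃ f : X →ᵇ ℝ≥0, (∀ x ∈ K, 1 ≤ f x) ∧ L f < a := by
  simpa [Jc, iInf_lt_iff] using ha

lemma Jc_union_le (hL : LGood L) (K₁ K₂ : Set X) :
    Jc L (K₁ ∪ K₂) ≤ Jc L K₁ + Jc L K₂ := by
  refine ENNReal.le_of_forall_pos_le_add fun ε hε _ => ?_
  set δ : ℝ≥0 := ε / 2 with hδdef
  have hε2 : ((δ : ℝ≥0) : ℝ≥0∞) ≠ 0 := by
    simpa [hδdef] using (half_pos hε).ne'
  obtain ⟨f₁, hf₁, hLf₁⟩ := exists_adm hL K₁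
    (ENNReal.lt_add_right (Jc_ne_top hL K₁) hε2)
  obtain ⟨f₂, hf₂, hLf₂⟩ := exists_adm hL K₂
    (ENNReal.lt_add_right (Jc_ne_top hL K₂) hε2)
  have hadm : ∀ x ∈ K₁ ∪ K₂, 1 ≤ (f₁ + f₂) x := by
    intro x hx
    simp only [BoundedContinuousFunction.coe_add, Pi.add_apply]
    rcases hx with hx | hx
    · exact le_add_right (hf₁ x hx)
    · exact le_add_left (hf₂ x hx)
  calc Jc L (K₁ ∪ K₂) ≤ L (f₁ + f₂) := Jc_le hadm
    _ = L f₁ + L f₂ := hL.add f₁ f₂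
    _ ≤ (Jc L K₁ + δ) + (Jc L K₂ + δ) := add_le_add hLf₁.le hLf₂.le
    _ = Jc L K₁ + Jc L K₂ + ((δ : ℝ≥0∞) + (δ : ℝ≥0∞)) := by ring
    _ = Jc L K₁ + Jc L K₂ + ε := by
        rw [← ENNReal.coe_add, hδdef, add_halves]

lemma Jc_disjoint_union (hL : LGood L) {K₁ K₂ : Set X} (h : Disjoint K₁ K₂)
    (h₁ : IsClosed K₁) (h₂ : IsClosed K₂) :
    Jc L K₁ + Jc L K₂ ≤ Jc L (K₁ ∪ K₂) := by
  refine le_iInf₂ fun f hf => ?_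
  obtain ⟨u, hu0, hu1, hu01⟩ := exists_continuous_zero_one_of_isClosed h₂ h₁ h.symm
  set a : X →ᵇ ℝ≥0 := mkOfCompact ⟨fun x => f x * Real.toNNReal (u x),
    (f.continuous.mul (continuous_real_toNNReal.comp u.continuous))⟩ with ha
  set b : X →ᵇ ℝ≥0 := mkOfCompact ⟨fun x => f x * Real.toNNReal (1 - u x),
    (f.continuous.mul (continuous_real_toNNReal.comp (continuous_const.sub u.continuous)))⟩ with hb
  have hadm₁ : ∀ x ∈ K₁, 1 ≤ a x := by
    intro x hx
    have : u x = 1 := hu1 hx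
    simp [ha, this, hf x (Or.inl hx)]
  have hadm₂ : ∀ x ∈ K₂, 1 ≤ b x := by
    intro x hx
    have : u x = 0 := hu0 hx
    simp [hb, this, hf x (Or.inr hx)]
  have hab : a + b = f := by
    ext x
    have h0 : (0 : ℝ) ≤ u x := (hu01 x).1
    have h1 : u x ≤ 1 := (hu01 x).2
    have : Real.toNNReal (u x) + Real.toNNReal (1 - u x) = 1 := by
      rw [← Real.toNNReal_add h0 (by linarith)]
      norm_num
    simp [ha, hb, ← mul_add, this]
  calc Jc L K₁ + Jc L K₂ ≤ L a + L b := add_le_add (Jc_le hadm₁) (Jc_le hadm₂)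
    _ = L (a + b) := (hL.add a b).symm
    _ = L f := by rw [hab]

/-- The content associated to `L`. -/
noncomputable def cont (hL : LGood L) : Content X where
  toFun K := (Jc L K).toNNReal
  mono' K₁ K₂ h := ENNReal.toNNReal_mono (Jc_ne_top hL _) (Jc_mono h)
  sup_disjoint' K₁ K₂ hd hc₁ hc₂ := by
    have : Jc L ((K₁ ⊔ K₂ : TopologicalSpace.Compacts X) : Set X) = Jc L K₁ + Jc L K₂ := by
      refine le_antisymm ?_ ?_
      · simpa using Jc_union_le hL (K₁ : Set X) K₂
      · simpa using Jc_disjoint_union hL hd hc₁ hc₂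
    simp only [this]
    rw [ENNReal.toNNReal_add (Jc_ne_top hL _) (Jc_ne_top hL _)]
  sup_le' K₁ K₂ := by
    have h := Jc_union_le hL (K₁ : Set X) K₂
    have h2 : Jc L ((K₁ ⊔ K₂ : TopologicalSpace.Compacts X) : Set X) ≤ Jc L (K₁ : Set X) + Jc L (K₂ : Set X) := by
      simpa using h
    have h3 := ENNReal.toNNReal_mono
      (ENNReal.add_ne_top.2 ⟨Jc_ne_top hL _, Jc_ne_top hL _⟩) h2
    rwa [ENNReal.toNNReal_add (Jc_ne_top hL _) (Jc_ne_top hL _)] at h3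

lemma cont_apply (hL : LGood L) (K : TopologicalSpace.Compacts X) :
    (cont hL K : ℝ≥0∞) = Jc L (K : Set X) := by
  simp [cont, Content.mk_apply, ENNReal.coe_toNNReal (Jc_ne_top hL _)]

lemma cont_regular (hL : LGood L) : (cont hL).ContentRegular := by
  intro K
  refine le_antisymm (le_iInf₂ fun K' hK' => (cont hL).mono _ _ (hK'.trans interior_subset)) ?_
  set A : ℝ≥0∞ := ⨅ (K' : TopologicalSpace.Compacts X) (_ : (K : Set X) ⊆ interior (K' : Set X)),
    (cont hL) K' with hA
  -- A is finite (take K' = univ)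
  have hAle : A ≤ (cont hL) ⟨univ, isCompact_univ⟩ := by
    refine iInf₂_le _ ?_
    simp
  have hAfin : A ≠ ∞ := by
    refine ne_top_of_le_ne_top ?_ hAle
    simp [cont_apply hL, Jc_ne_top hL]
  have key : ∀ δ : ℝ≥0, 0 < δ → δ < 1 →
      ((1 - δ : ℝ≥0) : ℝ≥0∞) * A ≤ Jc L (K : Set X) + δ := by
    intro δ h0 h1
    obtain ⟨f, hf, hLf⟩ := exists_adm hL (K : Set X)
      (ENNReal.lt_add_right (Jc_ne_top hL _) (show ((δ : ℝ≥0) : ℝ≥0∞) ≠ 0 by exact_mod_cast h0.ne'))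
    have h1δ : (0 : ℝ≥0) < 1 - δ := tsub_pos_of_lt h1
    set Kd : TopologicalSpace.Compacts X :=
      ⟨{x | (1 - δ : ℝ≥0) ≤ f x}, (isClosed_le continuous_const f.continuous).isCompact⟩ with hKd
    have hsub : (K : Set X) ⊆ interior (Kd : Set X) := by
      have hopen : IsOpen {x : X | (1 - δ : ℝ≥0) < f x} :=
        isOpen_lt continuous_const f.continuous
      have hsub1 : {x : X | (1 - δ : ℝ≥0) < f x} ⊆ (Kd : Set X) := fun x hx => (le_of_lt hx : (1 - δ : ℝ≥0) ≤ f x)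
      have hsub2 : (K : Set X) ⊆ {x : X | (1 - δ : ℝ≥0) < f x} := fun x hx =>
        lt_of_lt_of_le (tsub_lt_self one_pos h0) (hf x hx)
      exact hsub2.trans (interior_maximal hsub1 hopen)
    have hadm : ∀ x ∈ (Kd : Set X), 1 ≤ ((1 - δ)⁻¹ • f) x := by
      intro x hx
      have : (1 - δ : ℝ≥0) ≤ f x := hx
      have := mul_le_mul_right this (1 - δ)⁻¹
      rwa [inv_mul_cancel₀ h1δ.ne'] at this
    calc ((1 - δ : ℝ≥0) : ℝ≥0∞) * A ≤ ((1 - δ : ℝ≥0) : ℝ≥0∞) * (cont hL) Kd := by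
          exact mul_le_mul_right (iInf₂_le Kd hsub) _
      _ = ((1 - δ : ℝ≥0) : ℝ≥0∞) * Jc L (Kd : Set X) := by rw [cont_apply]
      _ ≤ ((1 - δ : ℝ≥0) : ℝ≥0∞) * L ((1 - δ)⁻¹ • f) := mul_le_mul_right (Jc_le hadm) _
      _ = ((1 - δ : ℝ≥0) : ℝ≥0∞) * (((1 - δ)⁻¹ : ℝ≥0) : ℝ≥0∞) * L f := by
          rw [hL.smul, mul_assoc]
      _ = L f := by
          rw [← ENNReal.coe_mul, mul_inv_cancel₀ h1δ.ne']
          simp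
      _ ≤ Jc L (K : Set X) + δ := hLf.le
  -- take δ → 0
  have htend : Tendsto (fun δ : ℝ≥0 => ((1 - δ : ℝ≥0) : ℝ≥0∞) * A) (𝓝[>] 0)
      (𝓝 A) := by
    have hc : Tendsto (fun δ : ℝ≥0 => ((1 - δ : ℝ≥0) : ℝ≥0∞)) (𝓝[>] (0:ℝ≥0)) (𝓝 1) := by
      have : Tendsto (fun δ : ℝ≥0 => ((1 - δ : ℝ≥0) : ℝ≥0∞)) (𝓝 (0:ℝ≥0)) (𝓝 1) := by
        have : Continuous fun δ : ℝ≥0 => ((1 - δ : ℝ≥0) : ℝ≥0∞) :=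
          ENNReal.continuous_coe.comp (continuous_const.sub continuous_id)
        simpa using this.tendsto 0
      exact this.mono_left nhdsWithin_le_nhds
    simpa using ENNReal.Tendsto.mul_const hc (Or.inr hAfin)
  have htend2 : Tendsto (fun δ : ℝ≥0 => Jc L (K : Set X) + (δ : ℝ≥0∞)) (𝓝[>] 0)
      (𝓝 (Jc L (K : Set X))) := by
    have : Tendsto (fun δ : ℝ≥0 => Jc L (K : Set X) + (δ : ℝ≥0∞)) (𝓝 (0:ℝ≥0))
        (𝓝 (Jc L (K : Set X))) := by
      have : Continuous fun δ : ℝ≥0 => Jc L (K : Set X) + (δ : ℝ≥0∞) :=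
        continuous_const.add ENNReal.continuous_coe
      simpa using this.tendsto 0
    exact this.mono_left nhdsWithin_le_nhds
  have hev : ∀ᶠ δ in 𝓝[>] (0:ℝ≥0), ((1 - δ : ℝ≥0) : ℝ≥0∞) * A ≤ Jc L (K : Set X) + δ := by
    filter_upwards [Ioo_mem_nhdsGT_of_mem (by exact ⟨le_refl _, one_pos⟩ :
      (0:ℝ≥0) ∈ Ico 0 1)] with δ hδ
    exact key δ hδ.1 hδ.2
  have hfin := le_of_tendsto_of_tendsto htend htend2 hev
  exact le_trans hfin (le_of_eq (cont_apply hL K).symm)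


lemma L_zero (hL : LGood L) : L 0 = 0 := by
  have := hL.add 0 0
  rw [add_zero] at this
  exact (ENNReal.add_right_inj (hL.fin 0)).1 (by rw [← this, add_zero]) |>.symm

lemma L_sum (hL : LGood L) {ι : Type*} (s : Finset ι) (g : ι → (X →ᵇ ℝ≥0)) :
    L (∑ i ∈ s, g i) = ∑ i ∈ s, L (g i) := by
  classical
  induction s using Finset.induction with
  | empty => simpa using L_zero hL
  | insert _ _ hi ih =>
    rw [Finset.sum_insert hi, hL.add, ih, Finset.sum_insert hi]

/-- Key NNReal identity: `∑_{k<N} min (s - k) 1 = min s N`. -/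
lemma sum_min_tsub (s : ℝ≥0) : ∀ N : ℕ, ∑ k ∈ Finset.range N, min (s - k) 1 = min s N
  | 0 => by simp
  | (N + 1) => by
    rw [Finset.sum_range_succ, sum_min_tsub s N]
    rcases le_total s N with h | h
    · have h1 : s - (N : ℝ≥0) = 0 := tsub_eq_zero_of_le h
      have h2 : min s (N : ℝ≥0) = s := min_eq_left h
      have h3 : min s (((N:ℕ) + 1 : ℕ) : ℝ≥0) = s := by
        refine min_eq_left (h.trans ?_)
        push_cast
        exact le_add_of_nonneg_right zero_le_one
      rw [h1, h2, h3]
      simp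
    · have h2 : min s (N : ℝ≥0) = (N : ℝ≥0) := min_eq_right h
      have key : (N : ℝ≥0) + min (s - N) 1 = min s ((N : ℝ≥0) + 1) := by
        rw [← min_add_add_left, add_tsub_cancel_of_le h]
      rw [h2, key]
      push_cast
      ring_nf


lemma ennreal_le_of_forall {a b c : ℝ≥0∞} (hc : c ≠ ∞)
    (h : ∀ n : ℕ, ((n : ℝ≥0∞) + 1) * a ≤ ((n : ℝ≥0∞) + 1) * b + c) : a ≤ b := by
  rcases eq_top_or_lt_top b with hb | _
  · simp [hb]
  have hle : ∀ n : ℕ, a ≤ b + ((n : ℝ≥0∞) + 1)⁻¹ * c := by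
    intro n
    have hn0 : ((n : ℝ≥0∞) + 1) ≠ 0 := by simp
    have hnt : ((n : ℝ≥0∞) + 1) ≠ ∞ :=
      ENNReal.add_ne_top.2 ⟨ENNReal.natCast_ne_top n, ENNReal.one_ne_top⟩
    calc a = ((n : ℝ≥0∞) + 1)⁻¹ * (((n : ℝ≥0∞) + 1) * a) := by
          rw [← mul_assoc, ENNReal.inv_mul_cancel hn0 hnt, one_mul]
      _ ≤ ((n : ℝ≥0∞) + 1)⁻¹ * (((n : ℝ≥0∞) + 1) * b + c) := mul_le_mul_right (h n) _
      _ = ((n : ℝ≥0∞) + 1)⁻¹ * (((n : ℝ≥0∞) + 1) * b) + ((n : ℝ≥0∞) + 1)⁻¹ * c :=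
          mul_add _ _ _
      _ = b + ((n : ℝ≥0∞) + 1)⁻¹ * c := by
          rw [← mul_assoc, ENNReal.inv_mul_cancel hn0 hnt, one_mul]
  have h1 : Tendsto (fun n : ℕ => ((n : ℝ≥0∞) + 1)⁻¹) atTop (𝓝 0) := by
    have := ENNReal.tendsto_inv_nat_nhds_zero.comp (tendsto_add_atTop_nat 1)
    convert this using 2 with n
    simp [Function.comp]
  have h2 : Tendsto (fun n : ℕ => b + ((n : ℝ≥0∞) + 1)⁻¹ * c) atTop (𝓝 b) := by
    have := ENNReal.Tendsto.mul_const h1 (Or.inr hc)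
    simpa using tendsto_const_nhds.add this
  exact le_of_tendsto_of_tendsto' tendsto_const_nhds h2 hle

section Measure

variable [MeasurableSpace X] [BorelSpace X]

lemma cont_measure_compacts (hL : LGood L) (K : TopologicalSpace.Compacts X) :
    (cont hL).measure (K : Set X) = Jc L (K : Set X) := by
  rw [Content.measure_eq_content_of_regular _ (cont_regular hL) K]
  exact cont_apply hL K

lemma cont_measure_univ_ne_top (hL : LGood L) : (cont hL).measure univ ≠ ∞ := by
  have := cont_measure_compacts hL ⟨univ, isCompact_univ⟩
  simp only [TopologicalSpace.Compacts.coe_mk] at this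
  rw [this]
  exact Jc_ne_top hL univ

lemma step (hL : LGood L) (f : X →ᵇ ℝ≥0) :
    L f ≤ (∫⁻ x, (f x : ℝ≥0∞) ∂(cont hL).measure) + (cont hL).measure univ ∧
    (∫⁻ x, (f x : ℝ≥0∞) ∂(cont hL).measure) ≤ L f + (cont hL).measure univ := by
  set γ := (cont hL).measure with hγ
  obtain ⟨N, hN⟩ : ∃ N : ℕ, ∀ x, f x ≤ N := by
    rcases isEmpty_or_nonempty X with hX | hX
    · exact ⟨0, fun x => (IsEmpty.false x).elim⟩
    · obtain ⟨x₀, -, hx₀⟩ := isCompact_univ.exists_isMaxOn univ_nonempty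
        f.continuous.continuousOn
      refine ⟨⌈(f x₀ : ℝ≥0)⌉₊, fun x => (hx₀ (mem_univ x)).trans ?_⟩
      exact_mod_cast Nat.le_ceil (f x₀)
  have hGcont : ∀ k : ℕ, Continuous fun x => min (f x - (k : ℝ≥0)) 1 :=
    fun k => (f.continuous.sub continuous_const).min continuous_const
  set G : ℕ → (X →ᵇ ℝ≥0) := fun k => mkOfCompact ⟨fun x => min (f x - k) 1, hGcont k⟩ with hG
  have hGx : ∀ k x, G k x = min (f x - k) 1 := fun k x => rfl
  have hDclosed : ∀ k : ℕ, IsClosed {x : X | (k : ℝ≥0) ≤ f x} :=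
    fun k => isClosed_le continuous_const f.continuous
  set D : ℕ → TopologicalSpace.Compacts X :=
    fun k => ⟨{x | (k : ℝ≥0) ≤ f x}, (hDclosed k).isCompact⟩ with hD
  have hDmeas : ∀ k, MeasurableSet (D k : Set X) := fun k => (hDclosed k).measurableSet
  have hsum : ∀ x, ∑ k ∈ Finset.range N, G k x = f x := by
    intro x
    simp only [hGx]
    rw [sum_min_tsub (f x) N, min_eq_left (hN x)]
  have hfsum : f = ∑ k ∈ Finset.range N, G k := by
    ext x
    rw [coe_sum, Finset.sum_apply]
    exact_mod_cast (hsum x).symm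
  have hGadm : ∀ k, ∀ x ∈ (D (k + 1) : Set X), 1 ≤ G k x := by
    intro k x hx
    have hx' : ((k + 1 : ℕ) : ℝ≥0) ≤ f x := hx
    have : (k : ℝ≥0) + 1 ≤ f x := by exact_mod_cast hx'
    exact le_min (le_tsub_of_add_le_left this) le_rfl
  have hGle1 : ∀ k x, G k x ≤ 1 := fun k x => min_le_right _ _
  have hGzero : ∀ k, ∀ x ∉ (D k : Set X), G k x = 0 := by
    intro k x hx
    have h1 : f x < (k : ℝ≥0) := lt_of_not_ge hx
    have h2 : f x - (k : ℝ≥0) = 0 := tsub_eq_zero_of_le h1.le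
    simp [hGx, h2]
  have hGmeas : ∀ k : ℕ, Measurable fun x => (G k x : ℝ≥0∞) :=
    fun k => (G k).continuous.measurable.coe_nnreal_ennreal
  have hLlow : ∀ k, γ (D (k + 1) : Set X) ≤ L (G k) := fun k => by
    rw [hγ, cont_measure_compacts hL]
    exact Jc_le (hGadm k)
  have hLhigh : ∀ k, L (G k) ≤ γ (D k : Set X) := fun k => by
    rw [hγ, cont_measure_compacts hL]
    exact le_Jc hL (hGle1 k) (hGzero k)
  have hIlow : ∀ k, γ (D (k + 1) : Set X) ≤ ∫⁻ x, (G k x : ℝ≥0∞) ∂γ := by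
    intro k
    rw [← lintegral_indicator_one (hDmeas (k + 1))]
    refine lintegral_mono fun x => ?_
    by_cases hx : x ∈ (D (k + 1) : Set X)
    · simp only [indicator_of_mem hx, Pi.one_apply]
      exact_mod_cast hGadm k x hx
    · simp [indicator_of_notMem hx]
  have hIhigh : ∀ k, ∫⁻ x, (G k x : ℝ≥0∞) ∂γ ≤ γ (D k : Set X) := by
    intro k
    rw [← lintegral_indicator_one (hDmeas k)]
    refine lintegral_mono fun x => ?_
    by_cases hx : x ∈ (D k : Set X)
    · simp only [indicator_of_mem hx, Pi.one_apply]
      exact_mod_cast hGle1 k x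
    · simp [indicator_of_notMem hx, hGzero k x hx]
  have hLsplit : L f = ∑ k ∈ Finset.range N, L (G k) := by
    conv_lhs => rw [hfsum]
    exact L_sum hL _ _
  have hIsplit : ∫⁻ x, (f x : ℝ≥0∞) ∂γ = ∑ k ∈ Finset.range N, ∫⁻ x, (G k x : ℝ≥0∞) ∂γ := by
    rw [← lintegral_finset_sum _ (fun k _ => hGmeas k)]
    congr 1
    ext x
    rw [← ENNReal.coe_finset_sum]
    exact_mod_cast (hsum x).symm
  have hshift : ∑ k ∈ Finset.range N, γ (D k : Set X) ≤
      (∑ k ∈ Finset.range N, γ (D (k + 1) : Set X)) + γ univ := by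
    cases N with
    | zero => simp
    | succ M =>
      rw [Finset.sum_range_succ' (fun k => γ (D k : Set X)) M]
      refine add_le_add ?_ (measure_mono (subset_univ _))
      exact Finset.sum_le_sum_of_subset (Finset.range_subset_range.2 (Nat.le_succ M))
  constructor
  · calc L f = ∑ k ∈ Finset.range N, L (G k) := hLsplit
      _ ≤ ∑ k ∈ Finset.range N, γ (D k : Set X) := Finset.sum_le_sum fun k _ => hLhigh k
      _ ≤ (∑ k ∈ Finset.range N, γ (D (k + 1) : Set X)) + γ univ := hshift
      _ ≤ (∑ k ∈ Finset.range N, ∫⁻ x, (G k x : ℝ≥0∞) ∂γ) + γ univ :=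
          add_le_add_left (Finset.sum_le_sum fun k _ => hIlow k) _
      _ = (∫⁻ x, (f x : ℝ≥0∞) ∂γ) + γ univ := by rw [← hIsplit]
  · calc ∫⁻ x, (f x : ℝ≥0∞) ∂γ = ∑ k ∈ Finset.range N, ∫⁻ x, (G k x : ℝ≥0∞) ∂γ := hIsplit
      _ ≤ ∑ k ∈ Finset.range N, γ (D k : Set X) := Finset.sum_le_sum fun k _ => hIhigh k
      _ ≤ (∑ k ∈ Finset.range N, γ (D (k + 1) : Set X)) + γ univ := hshift
      _ ≤ (∑ k ∈ Finset.range N, L (G k)) + γ univ :=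
          add_le_add_left (Finset.sum_le_sum fun k _ => hLlow k) _
      _ = L f + γ univ := by rw [← hLsplit]

/-- The Riesz representation: the integral against the constructed measure recovers `L`. -/
theorem lintegral_cont_measure (hL : LGood L) (f : X →ᵇ ℝ≥0) :
    ∫⁻ x, (f x : ℝ≥0∞) ∂(cont hL).measure = L f := by
  set γ := (cont hL).measure with hγ
  have huniv : γ univ ≠ ∞ := cont_measure_univ_ne_top hL
  have happ : ∀ n : ℕ, L (((n : ℝ≥0) + 1) • f) = ((n : ℝ≥0∞) + 1) * L f := by
    intro n
    rw [hL.smul]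
    norm_cast
  have happI : ∀ n : ℕ, ∫⁻ x, ((((n : ℝ≥0) + 1) • f) x : ℝ≥0∞) ∂γ
      = ((n : ℝ≥0∞) + 1) * ∫⁻ x, (f x : ℝ≥0∞) ∂γ := by
    intro n
    have hcast : ∀ x : X, ((((n : ℝ≥0) + 1) • f) x : ℝ≥0∞)
        = ((n : ℝ≥0∞) + 1) * (f x : ℝ≥0∞) := by
      intro x
      simp only [BoundedContinuousFunction.coe_smul, Pi.smul_apply, smul_eq_mul]
      push_cast
      ring
    simp_rw [hcast]
    exact lintegral_const_mul _ f.continuous.measurable.coe_nnreal_ennreal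
  refine le_antisymm ?_ ?_
  · refine ennreal_le_of_forall huniv fun n => ?_
    have h := (step hL (((n : ℝ≥0) + 1) • f)).2
    rwa [happ, happI] at h
  · refine ennreal_le_of_forall huniv fun n => ?_
    have h := (step hL (((n : ℝ≥0) + 1) • f)).1
    rwa [happ, happI] at h

end Measure


/-- Extension by zero along an open embedding of a compactly supported continuous function
is continuous. -/
lemma continuous_extend_of_isOpenEmbedding {A B : Type*} [TopologicalSpace A] [TopologicalSpace B]
    [T2Space B] {f : A → B} (hf : IsOpenEmbedding f) {g : A → ℝ≥0} (hg : Continuous g)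
    (hsupp : HasCompactSupport g) : Continuous (Function.extend f g 0) := by
  rw [continuous_iff_continuousAt]
  intro b
  by_cases hb : b ∈ range f
  · obtain ⟨a, rfl⟩ := hb
    have hmap : Filter.map f (𝓝 a) = 𝓝 (f a) := hf.map_nhds_eq a
    unfold ContinuousAt
    rw [hf.injective.extend_apply, ← hmap, tendsto_map'_iff]
    have hcomp : (Function.extend f g 0) ∘ f = g := funext fun a => hf.injective.extend_apply g 0 a
    rw [hcomp]
    exact hg.tendsto a
  · have hclosed : IsClosed (f '' tsupport g) := (hsupp.image hf.continuous).isClosed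
    have hmem : (f '' tsupport g)ᶜ ∈ 𝓝 b :=
      hclosed.isOpen_compl.mem_nhds fun hbb => hb (image_subset_range f _ hbb)
    have hzero : ∀ y ∈ (f '' tsupport g)ᶜ, Function.extend f g 0 y = 0 := by
      intro y hy
      rcases em (y ∈ range f) with ⟨a, rfl⟩ | hyr
      · rw [hf.injective.extend_apply]
        by_contra h
        exact hy ⟨a, subset_tsupport g h, rfl⟩
      · rw [Function.extend_apply' _ _ _ hyr]
        rfl
    have heq : Function.extend f g 0 =ᶠ[𝓝 b] fun _ => 0 :=
      Filter.eventuallyEq_of_mem hmem hzero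
    exact continuousAt_const.congr heq.symm


section Main

variable {E : Type*} [NormedAddCommGroup E] [NormedSpace ℝ E] [FiniteDimensional ℝ E]
  [MeasurableSpace E] [BorelSpace E]

theorem exists_optimal (F : E × E → ℝ≥0) (hF : Continuous F)
    (μ ν : Measure E) [IsProbabilityMeasure μ] [IsProbabilityMeasure ν]
    (hfin : (⨅ (γ : Measure (E × E)) (_ : γ.map Prod.fst = μ ∧ γ.map Prod.snd = ν),
      ∫⁻ z, (F z : ℝ≥0∞) ∂γ) < ∞) :
    ∃ γ : Measure (E × E), (γ.map Prod.fst = μ ∧ γ.map Prod.snd = ν) ∧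
      ∫⁻ z, (F z : ℝ≥0∞) ∂γ = ⨅ (γ' : Measure (E × E))
        (_ : γ'.map Prod.fst = μ ∧ γ'.map Prod.snd = ν), ∫⁻ z, (F z : ℝ≥0∞) ∂γ' := by
  classical
  set I : ℝ≥0∞ := ⨅ (γ : Measure (E × E)) (_ : γ.map Prod.fst = μ ∧ γ.map Prod.snd = ν),
      ∫⁻ z, (F z : ℝ≥0∞) ∂γ with hIdef
  have hIfin : I ≠ ∞ := hfin.ne
  -- minimizing sequence
  have Hseq : ∀ n : ℕ, ∃ γ' : Measure (E × E),
      (γ'.map Prod.fst = μ ∧ γ'.map Prod.snd = ν) ∧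
      ∫⁻ z, (F z : ℝ≥0∞) ∂γ' ≤ I + ((n : ℝ≥0∞))⁻¹ := by
    intro n
    have hlt : I < I + ((n : ℝ≥0∞))⁻¹ :=
      ENNReal.lt_add_right hIfin (ENNReal.inv_ne_zero.2 (ENNReal.natCast_ne_top n))
    conv_lhs at hlt => rw [hIdef]
    obtain ⟨γ', hγ'⟩ := iInf_lt_iff.1 hlt
    obtain ⟨hc', hlt'⟩ := iInf_lt_iff.1 hγ'
    exact ⟨γ', hc', hlt'.le⟩
  choose γseq hcoup hcost using Hseq
  have hprob : ∀ n, IsProbabilityMeasure (γseq n) := by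
    intro n
    constructor
    have h2 : (γseq n).map Prod.fst univ = μ univ := by rw [(hcoup n).1]
    rw [Measure.map_apply measurable_fst MeasurableSet.univ] at h2
    simpa using h2
  -- compactification
  set X : Set E := Metric.closedBall (0 : E) 1 with hX
  haveI : CompactSpace X := isCompact_iff_compactSpace.1 (isCompact_closedBall 0 1)
  set e : E ≃ₜ Metric.ball (0 : E) 1 := Homeomorph.unitBall with he
  have hBX : Metric.ball (0 : E) 1 ⊆ X := Metric.ball_subset_closedBall
  set φ : E → X := fun x => Set.inclusion hBX (e x) with hφ
  have hφcont : Continuous φ := (continuous_inclusion hBX).comp e.continuous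
  have hrange : range φ = {y : X | (y : E) ∈ Metric.ball (0 : E) 1} := by
    ext y
    constructor
    · rintro ⟨x, rfl⟩
      exact (e x).2
    · intro hy
      refine ⟨e.symm ⟨(y : E), hy⟩, Subtype.ext ?_⟩
      show ((Set.inclusion hBX (e (e.symm ⟨(y : E), hy⟩)) : X) : E) = (y : E)
      rw [Homeomorph.apply_symm_apply]
  have hrange_open : IsOpen (range φ) := by
    rw [hrange]
    exact Metric.isOpen_ball.preimage continuous_subtype_val
  have hφemb : IsEmbedding φ := (IsEmbedding.inclusion hBX).comp e.isEmbedding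
  have hφopen : IsOpenEmbedding φ := ⟨hφemb, hrange_open⟩
  set ψ : E × E → X × X := Prod.map φ φ with hψ
  have hψopen : IsOpenEmbedding ψ := hφopen.prodMap hφopen
  have hψme : MeasurableEmbedding ψ :=
    hψopen.isEmbedding.measurableEmbedding hψopen.isOpen_range.measurableSet
  have hφme : MeasurableEmbedding φ :=
    hφopen.isEmbedding.measurableEmbedding hφopen.isOpen_range.measurableSet
  -- push forward the minimizing sequence
  set γbar : ℕ → Measure (X × X) := fun n => (γseq n).map ψ with hγbar
  haveI hbarprob : ∀ n, IsProbabilityMeasure (γbar n) := fun n => by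
    haveI := hprob n
    exact Measure.isProbabilityMeasure_map hψme.measurable.aemeasurable
  -- ultrafilter
  set U : Ultrafilter ℕ := Ultrafilter.of atTop with hU
  have hUle : (U : Filter ℕ) ≤ atTop := Ultrafilter.of_le _
  -- the limit functional
  set L : ((X × X) →ᵇ ℝ≥0) → ℝ≥0∞ :=
    fun f => (Ultrafilter.map (fun n => ∫⁻ w, (f w : ℝ≥0∞) ∂(γbar n)) U).lim with hLdef
  have hLtends : ∀ f : (X × X) →ᵇ ℝ≥0,
      Tendsto (fun n => ∫⁻ w, (f w : ℝ≥0∞) ∂(γbar n)) (U : Filter ℕ) (𝓝 (L f)) := by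
    intro f
    have h := Ultrafilter.le_nhds_lim (Ultrafilter.map (fun n => ∫⁻ w, (f w : ℝ≥0∞) ∂(γbar n)) U)
    simpa [Tendsto, Ultrafilter.coe_map, hLdef] using h
  have hmeasf : ∀ f : (X × X) →ᵇ ℝ≥0, Measurable fun w => (f w : ℝ≥0∞) :=
    fun f => f.continuous.measurable.coe_nnreal_ennreal
  have hLgood : OTAux.LGood L := by
    constructor
    · intro f g
      refine tendsto_nhds_unique (hLtends (f + g)) ?_
      refine ((hLtends f).add (hLtends g)).congr fun n => ?_
      rw [← lintegral_add_left (hmeasf f)]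
      congr 1
    · intro f g hfg
      exact le_of_tendsto_of_tendsto' (hLtends f) (hLtends g) fun n =>
        lintegral_mono fun w => ENNReal.coe_le_coe.2 (hfg w)
    · intro r f
      refine tendsto_nhds_unique (hLtends (r • f)) ?_
      refine (ENNReal.Tendsto.const_mul (hLtends f) (Or.inr ENNReal.coe_ne_top)).congr fun n => ?_
      rw [← lintegral_const_mul _ (hmeasf f)]
      congr 1
    · intro f
      have hbd : ∀ n, ∫⁻ w, (f w : ℝ≥0∞) ∂γbar n ≤ (nndist f 0 : ℝ≥0∞) := by
        intro n
        calc ∫⁻ w, (f w : ℝ≥0∞) ∂γbar n ≤ ∫⁻ _, (nndist f 0 : ℝ≥0∞) ∂γbar n := by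
              refine lintegral_mono fun w => ENNReal.coe_le_coe.2 ?_
              have h2 := BoundedContinuousFunction.nndist_coe_le_nndist (f := f) (g := 0) w
              simpa using h2
          _ = (nndist f 0 : ℝ≥0∞) := by simp
      exact ne_top_of_le_ne_top ENNReal.coe_ne_top
        (le_of_tendsto (hLtends f) (Filter.Eventually.of_forall hbd))
  -- the limit measure on the compact square
  set γC : Measure (X × X) := (OTAux.cont hLgood).measure with hγC
  have hrep : ∀ f : (X × X) →ᵇ ℝ≥0, ∫⁻ w, (f w : ℝ≥0∞) ∂γC = L f := fun f =>
    OTAux.lintegral_cont_measure hLgood f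
  have hone : L 1 = 1 := by
    refine tendsto_nhds_unique (hLtends 1) ?_
    refine tendsto_const_nhds.congr fun n => ?_
    simp
  haveI hγCprob : IsProbabilityMeasure γC := by
    constructor
    have h := hrep 1
    rw [hone] at h
    simpa using h
  -- marginals of the limit measure
  have hmap_fst : γC.map Prod.fst = μ.map φ := by
    haveI : IsProbabilityMeasure (γC.map Prod.fst) :=
      Measure.isProbabilityMeasure_map measurable_fst.aemeasurable
    refine ext_of_forall_lintegral_eq_of_IsFiniteMeasure fun f => ?_
    rw [lintegral_map f.continuous.measurable.coe_nnreal_ennreal measurable_fst,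
      lintegral_map f.continuous.measurable.coe_nnreal_ennreal hφme.measurable]
    set fc : (X × X) →ᵇ ℝ≥0 := f.compContinuous ⟨Prod.fst, continuous_fst⟩ with hfc
    have h1 : ∫⁻ w, (f w.1 : ℝ≥0∞) ∂γC = L fc := hrep fc
    rw [h1]
    refine tendsto_nhds_unique (hLtends fc) ?_
    refine tendsto_const_nhds.congr fun n => ?_
    calc (∫⁻ x, (f (φ x) : ℝ≥0∞) ∂μ)
        = ∫⁻ x, (f (φ x) : ℝ≥0∞) ∂((γseq n).map Prod.fst) := by rw [(hcoup n).1]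
      _ = ∫⁻ z, (f (φ (Prod.fst z)) : ℝ≥0∞) ∂γseq n :=
          lintegral_map ((f.continuous.comp hφcont).measurable.coe_nnreal_ennreal) measurable_fst
      _ = ∫⁻ w, (fc w : ℝ≥0∞) ∂γbar n := by
          rw [hγbar, lintegral_map (hmeasf fc) hψme.measurable]
          exact lintegral_congr fun z => rfl
  have hmap_snd : γC.map Prod.snd = ν.map φ := by
    haveI : IsProbabilityMeasure (γC.map Prod.snd) :=
      Measure.isProbabilityMeasure_map measurable_snd.aemeasurable
    refine ext_of_forall_lintegral_eq_of_IsFiniteMeasure fun f => ?_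
    rw [lintegral_map f.continuous.measurable.coe_nnreal_ennreal measurable_snd,
      lintegral_map f.continuous.measurable.coe_nnreal_ennreal hφme.measurable]
    set fc : (X × X) →ᵇ ℝ≥0 := f.compContinuous ⟨Prod.snd, continuous_snd⟩ with hfc
    have h1 : ∫⁻ w, (f w.2 : ℝ≥0∞) ∂γC = L fc := hrep fc
    rw [h1]
    refine tendsto_nhds_unique (hLtends fc) ?_
    refine tendsto_const_nhds.congr fun n => ?_
    calc (∫⁻ x, (f (φ x) : ℝ≥0∞) ∂ν)
        = ∫⁻ x, (f (φ x) : ℝ≥0∞) ∂((γseq n).map Prod.snd) := by rw [(hcoup n).2]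
      _ = ∫⁻ z, (f (φ (Prod.snd z)) : ℝ≥0∞) ∂γseq n :=
          lintegral_map ((f.continuous.comp hφcont).measurable.coe_nnreal_ennreal) measurable_snd
      _ = ∫⁻ w, (fc w : ℝ≥0∞) ∂γbar n := by
          rw [hγbar, lintegral_map (hmeasf fc) hψme.measurable]
          exact lintegral_congr fun z => rfl
  -- the boundary is null
  have hφpre : φ ⁻¹' (range φ)ᶜ = ∅ := by
    ext x
    simp [mem_range_self]
  have hS : γC ((range φ ×ˢ range φ : Set (X × X))ᶜ) = 0 := by
    have hsub : ((range φ ×ˢ range φ : Set (X × X)))ᶜ ⊆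
        (Prod.fst ⁻¹' (range φ)ᶜ) ∪ (Prod.snd ⁻¹' (range φ)ᶜ) := by
      intro w hw
      by_cases h1 : w.1 ∈ range φ
      · right
        intro h2
        exact hw ⟨h1, h2⟩
      · left
        exact h1
    refine measure_mono_null hsub (measure_union_null ?_ ?_)
    · rw [← Measure.map_apply measurable_fst hrange_open.measurableSet.compl, hmap_fst,
        Measure.map_apply hφme.measurable hrange_open.measurableSet.compl, hφpre]
      simp
    · rw [← Measure.map_apply measurable_snd hrange_open.measurableSet.compl, hmap_snd,
        Measure.map_apply hφme.measurable hrange_open.measurableSet.compl, hφpre]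
      simp
  have hrangeψ : range ψ = (range φ ×ˢ range φ : Set (X × X)) := by
    rw [hψ, Set.range_prodMap]
  -- pull the measure back to E × E
  set γ : Measure (E × E) := γC.comap ψ with hγdef
  have hmapψγ : γ.map ψ = γC := by
    rw [hγdef, hψme.map_comap]
    refine Measure.restrict_eq_self_of_ae_mem ?_
    have : γC (range ψ)ᶜ = 0 := by rw [hrangeψ]; exact hS
    exact mem_ae_iff.2 this
  have htransfer : ∀ G : (X × X) → ℝ≥0∞, ∫⁻ w, G w ∂γC = ∫⁻ z, G (ψ z) ∂γ := by
    intro G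
    rw [← hmapψγ, hψme.lintegral_map]
  -- γ is a coupling
  have hcoupγ : γ.map Prod.fst = μ ∧ γ.map Prod.snd = ν := by
    constructor
    · have e1 : (γ.map Prod.fst).map φ = μ.map φ := by
        rw [Measure.map_map hφme.measurable measurable_fst]
        have hcomp : φ ∘ Prod.fst = Prod.fst ∘ ψ := rfl
        rw [hcomp, ← Measure.map_map measurable_fst hψme.measurable, hmapψγ, hmap_fst]
      have h2 := congrArg (Measure.comap φ) e1
      rwa [hφme.comap_map, hφme.comap_map] at h2
    · have e1 : (γ.map Prod.snd).map φ = ν.map φ := by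
        rw [Measure.map_map hφme.measurable measurable_snd]
        have hcomp : φ ∘ Prod.snd = Prod.snd ∘ ψ := rfl
        rw [hcomp, ← Measure.map_map measurable_snd hψme.measurable, hmapψγ, hmap_snd]
      have h2 := congrArg (Measure.comap φ) e1
      rwa [hφme.comap_map, hφme.comap_map] at h2
  -- the truncated costs
  set g : ℕ → E × E → ℝ≥0 :=
    fun N z => min (F z) N * min 1 (Real.toNNReal ((N : ℝ) + 1 - ‖z‖)) with hg
  have hgcont : ∀ N, Continuous (g N) := fun N =>
    (hF.min continuous_const).mul
      (continuous_const.min (continuous_real_toNNReal.comp (continuous_const.sub continuous_norm)))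
  have hgle : ∀ N z, g N z ≤ F z := by
    intro N z
    calc min (F z) N * min 1 (Real.toNNReal ((N : ℝ) + 1 - ‖z‖))
        ≤ min (F z) N * 1 := mul_le_mul_right (min_le_left _ _) _
      _ = min (F z) N := mul_one _
      _ ≤ F z := min_le_left _ _
  have hgmono : Monotone fun N => fun z => (g N z : ℝ≥0∞) := by
    intro N M hNM
    intro z
    have h1 : min (F z) (N : ℝ≥0) ≤ min (F z) (M : ℝ≥0) :=
      min_le_min le_rfl (by exact_mod_cast hNM)
    have h2 : min 1 (Real.toNNReal ((N : ℝ) + 1 - ‖z‖))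
        ≤ min 1 (Real.toNNReal ((M : ℝ) + 1 - ‖z‖)) := by
      refine min_le_min le_rfl (Real.toNNReal_mono ?_)
      have : (N : ℝ) ≤ M := by exact_mod_cast hNM
      linarith
    have hmul : g N z ≤ g M z := by
      rw [hg]
      exact mul_le_mul' h1 h2
    exact ENNReal.coe_le_coe.2 hmul
  have hgsup : ∀ z, (⨆ N, (g N z : ℝ≥0∞)) = (F z : ℝ≥0∞) := by
    intro z
    refine le_antisymm (iSup_le fun N => ENNReal.coe_le_coe.2 (hgle N z)) ?_
    obtain ⟨N, hFN, hzN⟩ : ∃ N : ℕ, F z ≤ (N : ℝ≥0) ∧ ‖z‖ ≤ (N : ℝ) := by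
      refine ⟨max ⌈(F z : ℝ≥0)⌉₊ ⌈‖z‖⌉₊, ?_, ?_⟩
      · exact (Nat.le_ceil _).trans (by exact_mod_cast le_max_left _ _)
      · exact (Nat.le_ceil _).trans (by exact_mod_cast le_max_right _ _)
    have h1 : min (F z) (N : ℝ≥0) = F z := min_eq_left hFN
    have h2 : min 1 (Real.toNNReal ((N : ℝ) + 1 - ‖z‖)) = 1 := by
      refine min_eq_left ?_
      rw [show (1 : ℝ≥0) = Real.toNNReal 1 from Real.toNNReal_one.symm]
      exact Real.toNNReal_mono (by linarith)
    have h3 : (F z : ℝ≥0∞) = (g N z : ℝ≥0∞) := by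
      rw [hg]
      simp only [h1, h2, mul_one]
    rw [h3]
    exact le_iSup (fun k : ℕ => (g k z : ℝ≥0∞)) N
  have hgz : ∀ N : ℕ, ∀ z ∉ Metric.closedBall (0 : E × E) ((N : ℝ) + 1), g N z = 0 := by
    intro N z hz
    have h1 : (N : ℝ) + 1 < ‖z‖ := by
      simpa [Metric.mem_closedBall, dist_zero_right, not_le] using hz
    have h0 : Real.toNNReal ((N : ℝ) + 1 - ‖z‖) = 0 := Real.toNNReal_of_nonpos (by linarith)
    simp [hg, h0]
  have hgcs : ∀ N, HasCompactSupport (g N) := fun N =>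
    HasCompactSupport.intro (isCompact_closedBall _ _) (hgz N)
  set G : ℕ → (X × X) → ℝ≥0 := fun N => Function.extend ψ (g N) 0 with hGdef
  have hGcont : ∀ N, Continuous (G N) := fun N =>
    OTAux.continuous_extend_of_isOpenEmbedding hψopen (hgcont N) (hgcs N)
  have hGψ : ∀ N z, G N (ψ z) = g N z := fun N z => hψme.injective.extend_apply _ _ z
  set Gb : ℕ → (X × X) →ᵇ ℝ≥0 :=
    fun N => BoundedContinuousFunction.mkOfCompact ⟨G N, hGcont N⟩ with hGb
  have htendI : Tendsto (fun n : ℕ => I + ((n : ℝ≥0∞))⁻¹) (U : Filter ℕ) (𝓝 I) := by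
    have h0 : Tendsto (fun n : ℕ => I + ((n : ℝ≥0∞))⁻¹) atTop (𝓝 I) := by
      simpa using tendsto_const_nhds.add ENNReal.tendsto_inv_nat_nhds_zero
    exact h0.mono_left hUle
  have hGbI : ∀ N, L (Gb N) ≤ I := by
    intro N
    refine le_of_tendsto_of_tendsto' (hLtends (Gb N)) htendI fun n => ?_
    calc ∫⁻ w, ((Gb N) w : ℝ≥0∞) ∂γbar n = ∫⁻ z, (g N z : ℝ≥0∞) ∂γseq n := by
          rw [hγbar]
          rw [lintegral_map (hmeasf (Gb N)) hψme.measurable]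
          congr 1
          ext z
          rw [show (Gb N) (ψ z) = G N (ψ z) from rfl, hGψ]
      _ ≤ ∫⁻ z, (F z : ℝ≥0∞) ∂γseq n := lintegral_mono fun z => ENNReal.coe_le_coe.2 (hgle N z)
      _ ≤ I + ((n : ℝ≥0∞))⁻¹ := hcost n
  have hcostγ : ∫⁻ z, (F z : ℝ≥0∞) ∂γ ≤ I := by
    have h1 : ∫⁻ z, (F z : ℝ≥0∞) ∂γ = ⨆ N, ∫⁻ z, (g N z : ℝ≥0∞) ∂γ := by
      rw [← lintegral_iSup (fun N => (hgcont N).measurable.coe_nnreal_ennreal) hgmono]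
      congr 1
      ext z
      exact (hgsup z).symm
    rw [h1]
    refine iSup_le fun N => ?_
    have h2 : ∫⁻ z, (g N z : ℝ≥0∞) ∂γ = L (Gb N) := by
      rw [← hrep (Gb N), htransfer fun w => ((Gb N) w : ℝ≥0∞)]
      congr 1
      ext z
      rw [show (Gb N) (ψ z) = G N (ψ z) from rfl, hGψ]
    rw [h2]
    exact hGbI N
  have hIle : I ≤ ∫⁻ z, (F z : ℝ≥0∞) ∂γ := iInf₂_le γ hcoupγ
  exact ⟨γ, hcoupγ, le_antisymm hcostγ hIle⟩

end Main

end OTAux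

/-- If `c` is continuous and bounded below by `m` and the optimal transport cost
(written, after subtracting the lower bound `m`, as an `ℝ≥0∞`-valued infimum) is finite,
then the infimum over couplings is attained. -/
theorem ot_infimum_attained (d : ℕ)
    (c : EuclideanSpace ℝ (Fin d) → EuclideanSpace ℝ (Fin d) → ℝ)
    (hc : Continuous fun z : EuclideanSpace ℝ (Fin d) × EuclideanSpace ℝ (Fin d) => c z.1 z.2)
    (m : ℝ) (hm : ∀ x y, m ≤ c x y)
    (μ ν : Measure (EuclideanSpace ℝ (Fin d)))
    [IsProbabilityMeasure μ] [IsProbabilityMeasure ν]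
    (hfin : (⨅ (γ : Measure (EuclideanSpace ℝ (Fin d) × EuclideanSpace ℝ (Fin d)))
      (_ : IsCoupling γ μ ν), ∫⁻ z, ENNReal.ofReal (c z.1 z.2 - m) ∂γ) < ∞) :
    ∃ γ : Measure (EuclideanSpace ℝ (Fin d) × EuclideanSpace ℝ (Fin d)),
      IsCoupling γ μ ν ∧
      (∫⁻ z, ENNReal.ofReal (c z.1 z.2 - m) ∂γ) =
        ⨅ (γ' : Measure (EuclideanSpace ℝ (Fin d) × EuclideanSpace ℝ (Fin d)))
          (_ : IsCoupling γ' μ ν), ∫⁻ z, ENNReal.ofReal (c z.1 z.2 - m) ∂γ' := by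
  have hF : Continuous fun z : EuclideanSpace ℝ (Fin d) × EuclideanSpace ℝ (Fin d) =>
      (c z.1 z.2 - m).toNNReal :=
    continuous_real_toNNReal.comp (hc.sub continuous_const)
  obtain ⟨γ, hγc, hγeq⟩ := OTAux.exists_optimal
    (fun z : EuclideanSpace ℝ (Fin d) × EuclideanSpace ℝ (Fin d) => (c z.1 z.2 - m).toNNReal)
    hF μ ν hfin
  exact ⟨γ, hγc, hγeq⟩
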